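/- Let 0 < |λ| < 1/2 and r_± = √(1/2 ± √(1/4 - λ²)). Then the contact angles θ_± along the two boundary circles of the Lagrangian catenoid, defined by ν_± = sin θ_± · X + cos θ_± · JX, satisfy sin θ_± = √(1-4λ²) and cos θ_± = ∓2λ; in particular cos θ₊ + cos θ₋ = 0 and θ_± ≠ π/2. -/

import Mathlib

/-- The Lagrangian catenoid parametrization in ℝ⁴. -/
noncomputable def X (lam r φ : ℝ) : EuclideanSpace ℝ (Fin 4) :=
  (WithLp.equiv 2 (Fin 4 → ℝ)).symm
    ![r * Real.cos φ, (lam / r) * Real.cos φ, r * Real.sin φ, -(lam / r) * Real.sin φ]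

/-- The complex structure `J(x₁,x₂,y₁,y₂) = (-x₂,x₁,y₂,-y₁)` on ℝ⁴. -/
noncomputable def Jmap (v : EuclideanSpace ℝ (Fin 4)) : EuclideanSpace ℝ (Fin 4) :=
  (WithLp.equiv 2 (Fin 4 → ℝ)).symm ![-(v 1), v 0, v 3, -(v 2)]

/-- The outward conormal `ν_ε` along the boundary circle `r = r_ε`, `ε = ±1`. -/
noncomputable def nu (lam ε φ : ℝ) : EuclideanSpace ℝ (Fin 4) :=
  ε • ((WithLp.equiv 2 (Fin 4 → ℝ)).symm
    ![Real.sqrt (1 / 2 + ε * Real.sqrt (1 / 4 - lam ^ 2)) * Real.cos φ,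
      -(lam / Real.sqrt (1 / 2 + ε * Real.sqrt (1 / 4 - lam ^ 2))) * Real.cos φ,
      Real.sqrt (1 / 2 + ε * Real.sqrt (1 / 4 - lam ^ 2)) * Real.sin φ,
      (lam / Real.sqrt (1 / 2 + ε * Real.sqrt (1 / 4 - lam ^ 2))) * Real.sin φ])

/-- the contact angles `θ_±` along the two boundary circles of the Lagrangian
catenoid, defined by `ν_± = sin θ_± · X + cos θ_± · JX`, satisfy `sin θ_± = √(1-4λ²)`,
`cos θ_± = ∓2λ`; in particular `cos θ₊ + cos θ₋ = 0` and `θ_± ≠ π/2`. -/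
theorem stmt5 (lam : ℝ) (h0 : 0 < |lam|) (h12 : |lam| < 1 / 2)
    (θp θm : ℝ) (hθp : θp ∈ Set.Ico 0 Real.pi) (hθm : θm ∈ Set.Ico 0 Real.pi)
    (hp : ∀ φ : ℝ, nu lam 1 φ =
      Real.sin θp • X lam (Real.sqrt (1 / 2 + Real.sqrt (1 / 4 - lam ^ 2))) φ
        + Real.cos θp • Jmap (X lam (Real.sqrt (1 / 2 + Real.sqrt (1 / 4 - lam ^ 2))) φ))
    (hm : ∀ φ : ℝ, nu lam (-1) φ =
      Real.sin θm • X lam (Real.sqrt (1 / 2 - Real.sqrt (1 / 4 - lam ^ 2))) φ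
        + Real.cos θm • Jmap (X lam (Real.sqrt (1 / 2 - Real.sqrt (1 / 4 - lam ^ 2))) φ)) :
    Real.sin θp = Real.sqrt (1 - 4 * lam ^ 2) ∧ Real.cos θp = -(2 * lam) ∧
    Real.sin θm = Real.sqrt (1 - 4 * lam ^ 2) ∧ Real.cos θm = 2 * lam ∧
    Real.cos θp + Real.cos θm = 0 ∧ θp ≠ Real.pi / 2 ∧ θm ≠ Real.pi / 2 := by
  have hlne : lam ≠ 0 := abs_pos.mp h0
  have hl2 : lam ^ 2 < 4⁻¹ := by nlinarith [sq_abs lam, abs_nonneg lam]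
  have hl0 : 0 < lam ^ 2 := pow_two_pos_of_ne_zero hlne
  set s := Real.sqrt (4⁻¹ - lam ^ 2) with hsdef
  have hs0 : 0 ≤ s := Real.sqrt_nonneg _
  have hs2 : s ^ 2 = 4⁻¹ - lam ^ 2 := Real.sq_sqrt (by linarith)
  have hslt : s < 2⁻¹ := by nlinarith
  set rp := Real.sqrt (2⁻¹ + s) with hrpdef
  set rm := Real.sqrt (2⁻¹ - s) with hrmdef
  have hrp : 0 < rp := Real.sqrt_pos.mpr (by linarith)
  have hrm : 0 < rm := Real.sqrt_pos.mpr (by linarith)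
  have hrp2 : rp ^ 2 = 2⁻¹ + s := Real.sq_sqrt (by linarith)
  have hrm2 : rm ^ 2 = 2⁻¹ - s := Real.sq_sqrt (by linarith)
  have hA : (2⁻¹ + s : ℝ) ≠ 0 := by linarith
  have hB : (2⁻¹ - s : ℝ) ≠ 0 := by linarith
  have e0 := congrArg (fun v => v 0) (hp 0)
  have e1 := congrArg (fun v => v 1) (hp 0)
  simp [nu, X, Jmap, ← hsdef, ← hrpdef] at e0 e1
  have f0 := congrArg (fun v => v 0) (hm 0)
  have f1 := congrArg (fun v => v 1) (hm 0)
  simp [nu, X, Jmap, ← sub_eq_add_neg, ← hsdef, ← hrmdef] at f0 f1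
  field_simp [ne_of_gt hrp] at e0 e1
  field_simp [ne_of_gt hrm] at f0 f1
  -- plus side: cos θp = -(2 lam)
  have hcp : Real.cos θp = -(2 * lam) := by
    have key : Real.cos θp * (2⁻¹ + s) = -(2 * lam) * (2⁻¹ + s) := by
      linear_combination lam * e0 - rp ^ 2 * e1 - Real.cos θp * hs2
        - (2 * lam + Real.cos θp * (rp ^ 2 + (2⁻¹ + s))) * hrp2
    exact mul_right_cancel₀ hA key
  -- minus side: cos θm = 2 lam
  have hcm : Real.cos θm = 2 * lam := by
    have key : Real.cos θm * (2⁻¹ - s) = (2 * lam) * (2⁻¹ - s) := by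
      linear_combination lam * f0 - rm ^ 2 * f1 - Real.cos θm * hs2
        - (Real.cos θm * (rm ^ 2 + (2⁻¹ - s)) - 2 * lam) * hrm2
    exact mul_right_cancel₀ hB key
  have hsnp : 0 ≤ Real.sin θp := Real.sin_nonneg_of_nonneg_of_le_pi hθp.1 hθp.2.le
  have hsnm : 0 ≤ Real.sin θm := Real.sin_nonneg_of_nonneg_of_le_pi hθm.1 hθm.2.le
  have hsp : Real.sin θp = Real.sqrt (1 - 4 * lam ^ 2) := by
    have h1 : Real.sin θp ^ 2 = 1 - 4 * lam ^ 2 := by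
      linear_combination Real.sin_sq_add_cos_sq θp + (2 * lam - Real.cos θp) * hcp
    rw [← h1, Real.sqrt_sq hsnp]
  have hsm : Real.sin θm = Real.sqrt (1 - 4 * lam ^ 2) := by
    have h1 : Real.sin θm ^ 2 = 1 - 4 * lam ^ 2 := by
      linear_combination Real.sin_sq_add_cos_sq θm - (2 * lam + Real.cos θm) * hcm
    rw [← h1, Real.sqrt_sq hsnm]
  refine ⟨hsp, hcp, hsm, hcm, by rw [hcp, hcm]; ring, ?_, ?_⟩
  · intro h; rw [h, Real.cos_pi_div_two] at hcp
    have : lam = 0 := by linarith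
    exact hlne this
  · intro h; rw [h, Real.cos_pi_div_two] at hcm
    have : lam = 0 := by linarith
    exact hlne this
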